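/- Fix σ² > 0, C > 0, B > 0 and a ∈ [0, 1/2). There exists a constant K (depending only on σ², C, B, a) such that for every integer n ≥ 2, every probability space, all centered square-integrable random variables e₁, …, e_n with E[e_j²] ≤ σ² for all j and |E[e_k e_j]| ≤ C (log j)² k^{−2a} j^{2(a−1)} for all 1 ≤ k < j ≤ n, and all real weights r₁, …, r_n with |r_j| ≤ B (log n)/n for all j, it holds that E[(∑_{j=1}^{n} r_j e_j)²] ≤ K (log n)⁴ / n. -/

import Mathlib

open MeasureTheory Real Finset

universe u

set_option maxHeartbeats 1000000 in
theorem stmt_8 (σ2 C B a : ℝ) (hσ2 : 0 < σ2) (hC : 0 < C) (hB : 0 < B)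
    (ha0 : 0 ≤ a) (ha : a < 1 / 2) :
    ∃ K : ℝ, ∀ (n : ℕ), 2 ≤ n →
      ∀ (Ω : Type u) (_ : MeasurableSpace Ω) (P : Measure Ω), IsProbabilityMeasure P →
        ∀ (e : ℕ → Ω → ℝ) (r : ℕ → ℝ),
          (∀ j ∈ Finset.Icc 1 n, MemLp (e j) 2 P) →
          (∀ j ∈ Finset.Icc 1 n, ∫ ω, e j ω ∂P = 0) →
          (∀ j ∈ Finset.Icc 1 n, ∫ ω, (e j ω) ^ 2 ∂P ≤ σ2) →
          (∀ k j : ℕ, 1 ≤ k → k < j → j ≤ n →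
            |∫ ω, e k ω * e j ω ∂P| ≤
              C * (Real.log j) ^ 2 * (k : ℝ) ^ (-(2 * a)) * (j : ℝ) ^ (2 * (a - 1))) →
          (∀ j ∈ Finset.Icc 1 n, |r j| ≤ B * Real.log n / n) →
          ∫ ω, (∑ j ∈ Finset.Icc 1 n, r j * e j ω) ^ 2 ∂P ≤ K * (Real.log n) ^ 4 / n := by
  refine ⟨B ^ 2 * σ2 / (Real.log 2) ^ 2 + 2 * C * B ^ 2, ?_⟩
  intro n hn Ω _ P hP e r he2 _hmean hvar hcov hr
  set s : Finset ℕ := Finset.Icc 1 n with hsdef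
  have hn1 : (1 : ℝ) ≤ (n : ℝ) := by exact_mod_cast le_trans (by norm_num) hn
  have hn0 : (0 : ℝ) < (n : ℝ) := lt_of_lt_of_le one_pos hn1
  set L : ℝ := Real.log n with hLdef
  have hlog2 : (0 : ℝ) < Real.log 2 := Real.log_pos one_lt_two
  have hL2 : Real.log 2 ≤ L := Real.log_le_log two_pos (by exact_mod_cast hn)
  have hL0 : 0 < L := lt_of_lt_of_le hlog2 hL2
  have hmem : ∀ j ∈ s, 1 ≤ j ∧ j ≤ n := fun j hj => Finset.mem_Icc.mp hj
  have hcards : ((s.card : ℕ) : ℝ) = n := by rw [hsdef, Nat.card_Icc]; push_cast; ring_nf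
  -- integrability of products
  have hint : ∀ j ∈ s, ∀ k ∈ s, Integrable (fun ω => e j ω * e k ω) P := by
    intro j hj k hk
    have h1 : MemLp ((e j) • (e k)) 1 P :=
      (he2 k hk).smul (he2 j hj)
    have h2 := memLp_one_iff_integrable.mp h1
    exact h2
  -- expansion of the square
  have hexp : ∫ ω, (∑ j ∈ s, r j * e j ω) ^ 2 ∂P
      = ∑ p ∈ s ×ˢ s, r p.1 * r p.2 * ∫ ω, e p.1 ω * e p.2 ω ∂P := by
    have h1 : ∀ ω, (∑ j ∈ s, r j * e j ω) ^ 2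
        = ∑ p ∈ s ×ˢ s, (r p.1 * r p.2) * (e p.1 ω * e p.2 ω) := by
      intro ω
      rw [sq, Finset.sum_mul_sum, Finset.sum_product]
      exact Finset.sum_congr rfl fun i _ => Finset.sum_congr rfl fun j _ => by ring
    calc ∫ ω, (∑ j ∈ s, r j * e j ω) ^ 2 ∂P
        = ∫ ω, ∑ p ∈ s ×ˢ s, (r p.1 * r p.2) * (e p.1 ω * e p.2 ω) ∂P :=
          integral_congr_ae (Filter.Eventually.of_forall h1)
      _ = ∑ p ∈ s ×ˢ s, ∫ ω, (r p.1 * r p.2) * (e p.1 ω * e p.2 ω) ∂P := by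
          refine integral_finset_sum _ fun p hp => ?_
          have hp' := Finset.mem_product.mp hp
          exact (hint p.1 hp'.1 p.2 hp'.2).const_mul _
      _ = ∑ p ∈ s ×ˢ s, r p.1 * r p.2 * ∫ ω, e p.1 ω * e p.2 ω ∂P :=
          Finset.sum_congr rfl fun p _ => integral_const_mul _ _
  -- covariance decay bound
  have hoff : ∀ k m : ℕ, 1 ≤ k → k < m → m ≤ n →
      C * (Real.log m) ^ 2 * (k : ℝ) ^ (-(2 * a)) * (m : ℝ) ^ (2 * (a - 1))
        ≤ C * L ^ 2 / m := by
    intro k m hk1 hkm hmn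
    have hk1' : (1 : ℝ) ≤ (k : ℝ) := by exact_mod_cast hk1
    have hm1 : (1 : ℝ) ≤ (m : ℝ) := by exact_mod_cast le_trans hk1 (le_of_lt hkm)
    have h1 : (k : ℝ) ^ (-(2 * a)) ≤ 1 :=
      Real.rpow_le_one_of_one_le_of_nonpos hk1' (by nlinarith)
    have h2 : (m : ℝ) ^ (2 * (a - 1)) ≤ (m : ℝ) ^ (-(1 : ℝ)) :=
      Real.rpow_le_rpow_of_exponent_le hm1 (by nlinarith)
    have h3 : (Real.log m) ^ 2 ≤ L ^ 2 := by
      have hlm : Real.log m ≤ L := Real.log_le_log (by linarith) (by exact_mod_cast hmn)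
      have h0 : (0 : ℝ) ≤ Real.log m := Real.log_nonneg hm1
      nlinarith
    have h4 : (m : ℝ) ^ (-(1 : ℝ)) = 1 / (m : ℝ) := by
      rw [Real.rpow_neg_one]; exact (one_div _).symm
    have hm0 : (0 : ℝ) < (m : ℝ) := lt_of_lt_of_le one_pos hm1
    calc C * (Real.log m) ^ 2 * (k : ℝ) ^ (-(2 * a)) * (m : ℝ) ^ (2 * (a - 1))
        ≤ C * L ^ 2 * 1 * ((m : ℝ) ^ (-(1 : ℝ))) := by
          gcongr
      _ = C * L ^ 2 / m := by rw [h4]; ring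
  -- pointwise bound for the covariances
  have habs : ∀ j ∈ s, ∀ k ∈ s,
      |∫ ω, e j ω * e k ω ∂P| ≤
        if j = k then σ2 else C * L ^ 2 / ((max j k : ℕ) : ℝ) := by
    intro j hj k hk
    obtain ⟨hj1, hjn⟩ := hmem j hj
    obtain ⟨hk1, hkn⟩ := hmem k hk
    rcases lt_trichotomy j k with h | h | h
    · rw [if_neg (Nat.ne_of_lt h)]
      have h5 := (hcov j k hj1 h hkn).trans (hoff j k hj1 h hkn)
      rw [Nat.max_eq_right (le_of_lt h)]
      exact h5
    · rw [if_pos h, ← h]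
      have heq : ∫ ω, e j ω * e j ω ∂P = ∫ ω, (e j ω) ^ 2 ∂P :=
        integral_congr_ae (Filter.Eventually.of_forall fun ω => (sq (e j ω)).symm)
      rw [heq, abs_of_nonneg (integral_nonneg fun ω => sq_nonneg _)]
      exact hvar j hj
    · rw [if_neg (Nat.ne_of_gt h)]
      have hcom : ∫ ω, e j ω * e k ω ∂P = ∫ ω, e k ω * e j ω ∂P :=
        integral_congr_ae (Filter.Eventually.of_forall fun ω => mul_comm _ _)
      rw [hcom, Nat.max_eq_left (le_of_lt h)]
      exact (hcov k j hk1 h hjn).trans (hoff k j hk1 h hjn)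
  -- per-pair bound on the summands
  have hBLn : (0 : ℝ) ≤ B * L / n := by positivity
  have hstep : ∑ p ∈ s ×ˢ s, r p.1 * r p.2 * ∫ ω, e p.1 ω * e p.2 ω ∂P
      ≤ ∑ p ∈ s ×ˢ s, (B * L / n) ^ 2 *
          (if p.1 = p.2 then σ2 else C * L ^ 2 / ((max p.1 p.2 : ℕ) : ℝ)) := by
    refine Finset.sum_le_sum fun p hp => ?_
    have hp' := Finset.mem_product.mp hp
    have hg0 : (0 : ℝ) ≤ if p.1 = p.2 then σ2 else C * L ^ 2 / ((max p.1 p.2 : ℕ) : ℝ) := by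
      split <;> positivity
    refine le_trans (le_abs_self _) ?_
    rw [abs_mul, abs_mul]
    calc |r p.1| * |r p.2| * |∫ ω, e p.1 ω * e p.2 ω ∂P|
        ≤ (B * L / n) * (B * L / n) *
            (if p.1 = p.2 then σ2 else C * L ^ 2 / ((max p.1 p.2 : ℕ) : ℝ)) := by
          refine mul_le_mul (mul_le_mul (hr p.1 hp'.1) (hr p.2 hp'.2)
            (abs_nonneg _) hBLn) (habs p.1 hp'.1 p.2 hp'.2) (abs_nonneg _) ?_
          positivity
      _ = (B * L / n) ^ 2 *
            (if p.1 = p.2 then σ2 else C * L ^ 2 / ((max p.1 p.2 : ℕ) : ℝ)) := by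
          rw [show (B * L / (n : ℝ)) * (B * L / (n : ℝ)) = (B * L / (n : ℝ)) ^ 2 from
            (pow_two _).symm]
  -- the key counting bound
  have hcount : ∑ m ∈ s, ∑ l ∈ s, (if l < m then 1 / (m : ℝ) else 0) ≤ n := by
    have hinner : ∀ m ∈ s, ∑ l ∈ s, (if l < m then 1 / (m : ℝ) else 0) ≤ 1 := by
      intro m hm
      obtain ⟨hm1, _⟩ := hmem m hm
      have hm1' : (1 : ℝ) ≤ (m : ℝ) := by exact_mod_cast hm1
      have hm0 : (0 : ℝ) < (m : ℝ) := lt_of_lt_of_le one_pos hm1'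
      rw [← Finset.sum_filter, Finset.sum_const, nsmul_eq_mul]
      have hsub : s.filter (· < m) ⊆ Finset.Ico 1 m := by
        intro x hx
        rw [Finset.mem_filter] at hx
        exact Finset.mem_Ico.mpr ⟨(hmem x hx.1).1, hx.2⟩
      have hcard : (((s.filter (· < m)).card : ℕ) : ℝ) ≤ (m : ℝ) := by
        have h6 := Finset.card_le_card hsub
        rw [Nat.card_Ico] at h6
        exact_mod_cast le_trans h6 (Nat.sub_le m 1)
      calc (((s.filter (· < m)).card : ℕ) : ℝ) * (1 / m)
          ≤ (m : ℝ) * (1 / m) := by gcongr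
        _ = 1 := by field_simp
    calc ∑ m ∈ s, ∑ l ∈ s, (if l < m then 1 / (m : ℝ) else 0)
        ≤ ∑ m ∈ s, (1 : ℝ) := Finset.sum_le_sum hinner
      _ = ((s.card : ℕ) : ℝ) := by simp
      _ = n := hcards
  -- sum of the bounds
  have hsum_g : ∑ p ∈ s ×ˢ s, (if p.1 = p.2 then σ2 else C * L ^ 2 / ((max p.1 p.2 : ℕ) : ℝ))
      ≤ σ2 * n + C * L ^ 2 * (2 * n) := by
    have hsplit : ∀ p : ℕ × ℕ, p ∈ s ×ˢ s →
        (if p.1 = p.2 then σ2 else C * L ^ 2 / ((max p.1 p.2 : ℕ) : ℝ))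
        ≤ (if p.1 = p.2 then σ2 else 0)
          + C * L ^ 2 * ((if p.1 < p.2 then 1 / (p.2 : ℝ) else 0)
            + (if p.2 < p.1 then 1 / (p.1 : ℝ) else 0)) := by
      intro p hp
      rcases lt_trichotomy p.1 p.2 with h | h | h
      · rw [if_neg (Nat.ne_of_lt h), if_neg (Nat.ne_of_lt h), if_pos h,
          if_neg (lt_asymm h), Nat.max_eq_right (le_of_lt h)]
        rw [add_zero, zero_add, mul_one_div]
      · have hp' := Finset.mem_product.mp hp
        have h2 := (hmem p.2 hp'.2).1
        have hCL : (0 : ℝ) ≤ C * L ^ 2 * ((1 : ℝ) / (p.2 : ℝ)) := by positivity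
        simp [h, lt_irrefl]
      · rw [if_neg (Nat.ne_of_gt h), if_neg (Nat.ne_of_gt h), if_neg (lt_asymm h),
          if_pos h, Nat.max_eq_left (le_of_lt h)]
        rw [zero_add, zero_add, mul_one_div]
    calc ∑ p ∈ s ×ˢ s, (if p.1 = p.2 then σ2 else C * L ^ 2 / ((max p.1 p.2 : ℕ) : ℝ))
        ≤ ∑ p ∈ s ×ˢ s, ((if p.1 = p.2 then σ2 else 0)
            + C * L ^ 2 * ((if p.1 < p.2 then 1 / (p.2 : ℝ) else 0)
              + (if p.2 < p.1 then 1 / (p.1 : ℝ) else 0))) :=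
          Finset.sum_le_sum hsplit
      _ = (∑ p ∈ s ×ˢ s, (if p.1 = p.2 then σ2 else 0))
            + C * L ^ 2 * ((∑ p ∈ s ×ˢ s, (if p.1 < p.2 then 1 / (p.2 : ℝ) else 0))
              + (∑ p ∈ s ×ˢ s, (if p.2 < p.1 then 1 / (p.1 : ℝ) else 0))) := by
          rw [Finset.sum_add_distrib, ← Finset.mul_sum, Finset.sum_add_distrib]
      _ ≤ σ2 * n + C * L ^ 2 * (n + n) := by
          have hd : (∑ p ∈ s ×ˢ s, (if p.1 = p.2 then σ2 else 0)) = σ2 * n := by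
            rw [Finset.sum_product]
            have : ∀ j ∈ s, (∑ k ∈ s, (if j = k then σ2 else 0)) = σ2 := by
              intro j hj
              rw [Finset.sum_ite_eq s j (fun _ => σ2), if_pos hj]
            rw [Finset.sum_congr rfl this, Finset.sum_const, nsmul_eq_mul, hcards, mul_comm]
          have h1 : (∑ p ∈ s ×ˢ s, (if p.1 < p.2 then 1 / (p.2 : ℝ) else 0)) ≤ n := by
            rw [Finset.sum_product, Finset.sum_comm]
            exact hcount
          have h2 : (∑ p ∈ s ×ˢ s, (if p.2 < p.1 then 1 / (p.1 : ℝ) else 0)) ≤ n := by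
            rw [Finset.sum_product]
            exact hcount
          rw [hd]
          have hCL2 : (0 : ℝ) ≤ C * L ^ 2 := by positivity
          nlinarith
      _ = σ2 * n + C * L ^ 2 * (2 * n) := by ring
  -- put everything together
  rw [hexp]
  calc ∑ p ∈ s ×ˢ s, r p.1 * r p.2 * ∫ ω, e p.1 ω * e p.2 ω ∂P
      ≤ ∑ p ∈ s ×ˢ s, (B * L / n) ^ 2 *
          (if p.1 = p.2 then σ2 else C * L ^ 2 / ((max p.1 p.2 : ℕ) : ℝ)) := hstep
    _ = (B * L / n) ^ 2 * ∑ p ∈ s ×ˢ s,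
          (if p.1 = p.2 then σ2 else C * L ^ 2 / ((max p.1 p.2 : ℕ) : ℝ)) :=
        (Finset.mul_sum _ _ _).symm
    _ ≤ (B * L / n) ^ 2 * (σ2 * n + C * L ^ 2 * (2 * n)) := by
        have hQ0 : (0 : ℝ) ≤ (B * L / n) ^ 2 := sq_nonneg _
        exact mul_le_mul_of_nonneg_left hsum_g hQ0
    _ = (B ^ 2 * σ2 * L ^ 2 + 2 * C * B ^ 2 * L ^ 4) / n := by
        field_simp
    _ ≤ (B ^ 2 * σ2 / (Real.log 2) ^ 2 + 2 * C * B ^ 2) * L ^ 4 / n := by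
        have hkey : (Real.log 2) ^ 2 ≤ L ^ 2 := by nlinarith
        have h7 : (0 : ℝ) ≤ B ^ 2 * σ2 * L ^ 2 * (L ^ 2 - (Real.log 2) ^ 2) :=
          mul_nonneg (by positivity) (by linarith)
        have hm : B ^ 2 * σ2 * L ^ 2 ≤ B ^ 2 * σ2 / (Real.log 2) ^ 2 * L ^ 4 := by
          rw [div_mul_eq_mul_div, le_div_iff₀ (by positivity)]
          calc B ^ 2 * σ2 * L ^ 2 * Real.log 2 ^ 2
              ≤ B ^ 2 * σ2 * L ^ 2 * L ^ 2 := by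
                have h9 : (0 : ℝ) ≤ B ^ 2 * σ2 * L ^ 2 := by positivity
                exact mul_le_mul_of_nonneg_left hkey h9
            _ = B ^ 2 * σ2 * L ^ 4 := by ring
        have hexp2 : (B ^ 2 * σ2 / (Real.log 2) ^ 2 + 2 * C * B ^ 2) * L ^ 4
            = B ^ 2 * σ2 / (Real.log 2) ^ 2 * L ^ 4 + 2 * C * B ^ 2 * L ^ 4 := by ring
        have hnum : B ^ 2 * σ2 * L ^ 2 + 2 * C * B ^ 2 * L ^ 4
            ≤ (B ^ 2 * σ2 / (Real.log 2) ^ 2 + 2 * C * B ^ 2) * L ^ 4 := by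
          rw [hexp2]; linarith
        gcongr
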